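/- arXiv:2603.10067 — 3 statements merged into one kernel-verified Lean document; each statement's English description precedes it below -/
import Mathlib

section
/- For real matrices A, B ∈ ℝ^{m×n}, the trace inner product satisfies Tr(A^T B) ≤ Σ_{i=1}^{r} σ_i(A) σ_i(B), where r = min(m,n) and σ_i(·) denotes the i-th largest singular value. -/
open Matrix

/-- `IsSVD M U σ V` asserts that `M = U · diag σ · Vᵀ` is a (thin) singular value
decomposition of `M`: `U` and `V` have orthonormal columns and `σ` lists the
singular values in nonincreasing order. -/
def IsSVD {m n r : ℕ} (M : Matrix (Fin m) (Fin n) ℝ)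
    (U : Matrix (Fin m) (Fin r) ℝ) (σ : Fin r → ℝ) (V : Matrix (Fin n) (Fin r) ℝ) : Prop :=
  Uᵀ * U = 1 ∧ Vᵀ * V = 1 ∧ (∀ i, 0 ≤ σ i) ∧ Antitone σ ∧ M = U * Matrix.diagonal σ * Vᵀ

section VNAux
open Finset

lemma vn_swap (r : ℕ) (f : ℕ → ℕ → ℝ) :
    ∑ i ∈ range r, ∑ k ∈ Ico i r, f i k = ∑ k ∈ range r, ∑ i ∈ range (k+1), f i k := by
  apply Finset.sum_comm'
  intro i k
  simp only [mem_range, mem_Ico]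
  omega

lemma vn_telescope (r : ℕ) (a : ℕ → ℝ) (har : a r = 0) (i : ℕ) (hi : i < r) :
    a i = ∑ k ∈ Ico i r, (a k - a (k+1)) := by
  rw [Finset.sum_Ico_eq_sum_range]
  have h := Finset.sum_range_sub' (fun t => a (i + t)) (r - i)
  simp only [← Nat.add_assoc] at h
  rw [h, Nat.add_zero, show i + (r - i) = r by omega, har, sub_zero]

/-- Abel-type double summation by parts. -/
lemma vn_abel (r : ℕ) (a b : ℕ → ℝ) (c : ℕ → ℕ → ℝ) (har : a r = 0) (hbr : b r = 0) :
    ∑ i ∈ range r, ∑ j ∈ range r, a i * b j * c i j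
      = ∑ k ∈ range r, ∑ l ∈ range r,
          (a k - a (k+1)) * (b l - b (l+1)) * (∑ i ∈ range (k+1), ∑ j ∈ range (l+1), c i j) := by
  set α : ℕ → ℝ := fun k => a k - a (k+1) with hα
  set β : ℕ → ℝ := fun l => b l - b (l+1) with hβ
  calc ∑ i ∈ range r, ∑ j ∈ range r, a i * b j * c i j
      = ∑ i ∈ range r, ∑ j ∈ range r, ∑ k ∈ Ico i r, ∑ l ∈ Ico j r, α k * β l * c i j := by
        refine Finset.sum_congr rfl fun i hi => Finset.sum_congr rfl fun j hj => ?_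
        rw [vn_telescope r a har i (mem_range.mp hi), vn_telescope r b hbr j (mem_range.mp hj),
          Finset.sum_mul_sum, Finset.sum_mul]
        exact Finset.sum_congr rfl fun k _ => by rw [Finset.sum_mul]
    _ = ∑ i ∈ range r, ∑ k ∈ Ico i r, ∑ j ∈ range r, ∑ l ∈ Ico j r, α k * β l * c i j := by
        exact Finset.sum_congr rfl fun i _ => Finset.sum_comm
    _ = ∑ k ∈ range r, ∑ i ∈ range (k+1), ∑ j ∈ range r, ∑ l ∈ Ico j r, α k * β l * c i j :=
        vn_swap r _
    _ = ∑ k ∈ range r, ∑ j ∈ range r, ∑ l ∈ Ico j r, ∑ i ∈ range (k+1), α k * β l * c i j := by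
        refine Finset.sum_congr rfl fun k _ => ?_
        rw [Finset.sum_comm]
        exact Finset.sum_congr rfl fun j _ => Finset.sum_comm
    _ = ∑ k ∈ range r, ∑ l ∈ range r, ∑ j ∈ range (l+1), ∑ i ∈ range (k+1), α k * β l * c i j := by
        exact Finset.sum_congr rfl fun k _ => vn_swap r _
    _ = ∑ k ∈ range r, ∑ l ∈ range r, α k * β l * (∑ i ∈ range (k+1), ∑ j ∈ range (l+1), c i j) := by
        refine Finset.sum_congr rfl fun k _ => Finset.sum_congr rfl fun l _ => ?_
        rw [Finset.mul_sum, Finset.sum_comm]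
        exact Finset.sum_congr rfl fun j _ => by rw [Finset.mul_sum]

lemma vn_count (k l : ℕ) :
    ∑ i ∈ range k, ∑ j ∈ range l, (if i = j then (1:ℝ) else 0) = min k l := by
  have h1 : ∀ i, ∑ j ∈ range l, (if i = j then (1:ℝ) else 0) = if i < l then 1 else 0 := by
    intro i
    rw [Finset.sum_ite_eq (range l) i (fun _ => (1:ℝ))]
    simp [mem_range]
  simp only [h1, ← Finset.sum_filter]
  have h2 : (range k).filter (fun i => i < l) = range (min k l) := by
    ext x; simp only [mem_filter, mem_range]; omega
  rw [h2]
  simp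

lemma vn_key (r : ℕ) (a b : ℕ → ℝ) (c : ℕ → ℕ → ℝ)
    (haA : ∀ k, a (k+1) ≤ a k) (hbA : ∀ k, b (k+1) ≤ b k)
    (har : a r = 0) (hbr : b r = 0)
    (hc : ∀ k l, ∑ i ∈ range k, ∑ j ∈ range l, c i j ≤ min k l) :
    ∑ i ∈ range r, ∑ j ∈ range r, a i * b j * c i j ≤ ∑ i ∈ range r, a i * b i := by
  have hrhs : ∑ i ∈ range r, a i * b i
      = ∑ i ∈ range r, ∑ j ∈ range r, a i * b j * (if i = j then (1:ℝ) else 0) := by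
    refine Finset.sum_congr rfl fun i hi => ?_
    rw [Finset.sum_eq_single i]
    · simp
    · intro j _ hij; simp [Ne.symm hij]
    · intro h; exact absurd hi h
  rw [hrhs, vn_abel r a b c har hbr, vn_abel r a b _ har hbr]
  refine Finset.sum_le_sum fun k _ => Finset.sum_le_sum fun l _ => ?_
  have hαβ : 0 ≤ (a k - a (k+1)) * (b l - b (l+1)) :=
    mul_nonneg (by linarith [haA k]) (by linarith [hbA l])
  rw [vn_count]
  exact mul_le_mul_of_nonneg_left (le_trans (hc (k+1) (l+1)) (by push_cast; norm_num)) hαβ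
open Matrix Finset

lemma vn_bessel {m r : ℕ} (U W : Matrix (Fin m) (Fin r) ℝ)
    (hU : Uᵀ * U = 1) (hW : Wᵀ * W = 1) (k : Fin r) :
    ∑ l, ((Uᵀ * W) k l)^2 ≤ 1 := by
  set P := Uᵀ * W with hP
  set M := U - W * Pᵀ with hM
  have hMM : Mᵀ * M = 1 - P * Pᵀ := by
    have hWU : Wᵀ * U = Pᵀ := by rw [hP, transpose_mul, transpose_transpose]
    rw [hM, transpose_sub, transpose_mul, transpose_transpose, Matrix.sub_mul,
      Matrix.mul_sub, Matrix.mul_sub, hU]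
    rw [← Matrix.mul_assoc Uᵀ W Pᵀ, ← hP, Matrix.mul_assoc P Wᵀ U, hWU,
      Matrix.mul_assoc P Wᵀ (W * Pᵀ), ← Matrix.mul_assoc Wᵀ W Pᵀ, hW, Matrix.one_mul]
    abel
  have h1 : (0:ℝ) ≤ (Mᵀ * M) k k := by
    rw [Matrix.mul_apply]
    exact Finset.sum_nonneg fun i _ => by
      simp only [transpose_apply]; exact mul_self_nonneg _
  have h2 : (Mᵀ * M) k k = 1 - (P * Pᵀ) k k := by rw [hMM]; simp [Matrix.one_apply]
  have h3 : (P * Pᵀ) k k = ∑ l, (P k l)^2 := by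
    rw [Matrix.mul_apply]
    exact Finset.sum_congr rfl fun l _ => by simp [transpose_apply, sq]
  linarith
open Matrix Finset

lemma vn_trace {m n r : ℕ} (UA : Matrix (Fin m) (Fin r) ℝ) (σA : Fin r → ℝ)
    (VA : Matrix (Fin n) (Fin r) ℝ) (UB : Matrix (Fin m) (Fin r) ℝ) (σB : Fin r → ℝ)
    (VB : Matrix (Fin n) (Fin r) ℝ) :
    Matrix.trace ((UA * Matrix.diagonal σA * VAᵀ)ᵀ * (UB * Matrix.diagonal σB * VBᵀ))
      = ∑ k, ∑ l, σA k * σB l * ((UAᵀ * UB) k l * (VAᵀ * VB) k l) := by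
  have h1 : (UA * Matrix.diagonal σA * VAᵀ)ᵀ * (UB * Matrix.diagonal σB * VBᵀ)
      = VA * ((Matrix.diagonal σA * (UAᵀ * UB) * Matrix.diagonal σB) * VBᵀ) := by
    simp only [transpose_mul, diagonal_transpose, transpose_transpose, Matrix.mul_assoc]
  rw [h1, Matrix.trace_mul_comm, Matrix.mul_assoc, Matrix.trace]
  have h2 : VBᵀ * VA = (VAᵀ * VB)ᵀ := by rw [transpose_mul, transpose_transpose]
  rw [h2]
  refine Finset.sum_congr rfl fun k _ => ?_
  rw [Matrix.diag_apply, Matrix.mul_apply]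
  refine Finset.sum_congr rfl fun l _ => ?_
  rw [Matrix.mul_diagonal, Matrix.diagonal_mul, transpose_apply]
  ring
open Finset

lemma vn_ext_row (r : ℕ) (f : ℕ → ℕ → ℝ) (hzero : ∀ i j, (r ≤ i ∨ r ≤ j) → f i j = 0)
    (hrow : ∀ i, i < r → ∑ j ∈ range r, (f i j)^2 ≤ 1) :
    ∀ i t, ∑ j ∈ range t, (f i j)^2 ≤ 1 := by
  intro i t
  by_cases hi : i < r
  · calc ∑ j ∈ range t, (f i j)^2
        ≤ ∑ j ∈ range (max t r), (f i j)^2 :=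
          Finset.sum_le_sum_of_subset_of_nonneg
            (Finset.range_subset_range.mpr (le_max_left t r))
            (fun j _ _ => sq_nonneg _)
      _ = ∑ j ∈ range r, (f i j)^2 := by
          refine (Finset.sum_subset (Finset.range_subset_range.mpr (le_max_right t r)) ?_).symm
          intro j _ hj
          rw [hzero i j (Or.inr (by simpa using hj))]
          norm_num
      _ ≤ 1 := hrow i hi
  · have : ∀ j, f i j = 0 := fun j => hzero i j (Or.inl (by omega))
    simp [this]

lemma vn_block (r : ℕ) (p q : ℕ → ℕ → ℝ)
    (hprow : ∀ i t, ∑ j ∈ range t, (p i j)^2 ≤ 1)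
    (hpcol : ∀ j t, ∑ i ∈ range t, (p i j)^2 ≤ 1)
    (hqrow : ∀ i t, ∑ j ∈ range t, (q i j)^2 ≤ 1)
    (hqcol : ∀ j t, ∑ i ∈ range t, (q i j)^2 ≤ 1)
    (k l : ℕ) :
    ∑ i ∈ range k, ∑ j ∈ range l, p i j * q i j ≤ (min k l : ℝ) := by
  have sqbound : ∀ (g : ℕ → ℕ → ℝ), (∀ i t, ∑ j ∈ range t, (g i j)^2 ≤ 1) →
      (∀ j t, ∑ i ∈ range t, (g i j)^2 ≤ 1) →
      ∑ i ∈ range k, ∑ j ∈ range l, (g i j)^2 ≤ (min k l : ℝ) := by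
    intro g hgrow hgcol
    refine le_min ?_ ?_
    · calc ∑ i ∈ range k, ∑ j ∈ range l, (g i j)^2
          ≤ ∑ _i ∈ range k, (1:ℝ) := Finset.sum_le_sum fun i _ => hgrow i l
        _ = k := by simp
    · calc ∑ i ∈ range k, ∑ j ∈ range l, (g i j)^2
          = ∑ j ∈ range l, ∑ i ∈ range k, (g i j)^2 := Finset.sum_comm
        _ ≤ ∑ _j ∈ range l, (1:ℝ) := Finset.sum_le_sum fun j _ => hgcol j k
        _ = l := by simp
  calc ∑ i ∈ range k, ∑ j ∈ range l, p i j * q i j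
      ≤ ∑ i ∈ range k, ∑ j ∈ range l, ((p i j)^2 + (q i j)^2) / 2 := by
        refine Finset.sum_le_sum fun i _ => Finset.sum_le_sum fun j _ => ?_
        nlinarith [sq_nonneg (p i j - q i j)]
    _ = (∑ i ∈ range k, ∑ j ∈ range l, (p i j)^2
          + ∑ i ∈ range k, ∑ j ∈ range l, (q i j)^2) / 2 := by
        rw [← Finset.sum_add_distrib]
        simp_rw [← Finset.sum_add_distrib, ← Finset.sum_div]
    _ ≤ ((min k l : ℝ) + (min k l : ℝ)) / 2 := by
        have h1 := sqbound p hprow hpcol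
        have h2 := sqbound q hqrow hqcol
        linarith
    _ = (min k l : ℝ) := by ring
open Matrix Finset

theorem vn_general {m n r : ℕ} (A B : Matrix (Fin m) (Fin n) ℝ)
    (UA : Matrix (Fin m) (Fin r) ℝ) (σA : Fin r → ℝ)
    (VA : Matrix (Fin n) (Fin r) ℝ)
    (UB : Matrix (Fin m) (Fin r) ℝ) (σB : Fin r → ℝ)
    (VB : Matrix (Fin n) (Fin r) ℝ)
    (hUA : UAᵀ * UA = 1) (hVA : VAᵀ * VA = 1) (hσA0 : ∀ i, 0 ≤ σA i) (hσAa : Antitone σA)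
    (hAeq : A = UA * Matrix.diagonal σA * VAᵀ)
    (hUB : UBᵀ * UB = 1) (hVB : VBᵀ * VB = 1) (hσB0 : ∀ i, 0 ≤ σB i) (hσBa : Antitone σB)
    (hBeq : B = UB * Matrix.diagonal σB * VBᵀ) :
    Matrix.trace (Aᵀ * B) ≤ ∑ i, σA i * σB i := by
  set P := UAᵀ * UB with hPdef
  set Q := VAᵀ * VB with hQdef
  -- extended sequences
  set a : ℕ → ℝ := fun k => if h : k < r then σA ⟨k, h⟩ else 0 with ha
  set b : ℕ → ℝ := fun k => if h : k < r then σB ⟨k, h⟩ else 0 with hb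
  set p : ℕ → ℕ → ℝ := fun i j => if h : i < r ∧ j < r then P ⟨i, h.1⟩ ⟨j, h.2⟩ else 0 with hp
  set q : ℕ → ℕ → ℝ := fun i j => if h : i < r ∧ j < r then Q ⟨i, h.1⟩ ⟨j, h.2⟩ else 0 with hq
  -- step 1: trace expansion
  have h1 : Matrix.trace (Aᵀ * B) = ∑ k, ∑ l, σA k * σB l * (P k l * Q k l) := by
    rw [hAeq, hBeq]; exact vn_trace UA σA VA UB σB VB
  -- step 2: convert to range sums
  have h2 : Matrix.trace (Aᵀ * B)
      = ∑ i ∈ range r, ∑ j ∈ range r, a i * b j * (p i j * q i j) := by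
    rw [h1, ← Fin.sum_univ_eq_sum_range (fun i => ∑ j ∈ range r, a i * b j * (p i j * q i j)) r]
    refine Finset.sum_congr rfl fun k _ => ?_
    rw [← Fin.sum_univ_eq_sum_range (fun j => a ↑k * b j * (p ↑k j * q ↑k j)) r]
    refine Finset.sum_congr rfl fun l _ => ?_
    simp only [ha, hb, hp, hq, k.isLt, l.isLt, and_self, dif_pos, Fin.eta]
  have hRHS : ∑ i, σA i * σB i = ∑ i ∈ range r, a i * b i := by
    rw [← Fin.sum_univ_eq_sum_range (fun i => a i * b i) r]
    refine Finset.sum_congr rfl fun i _ => ?_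
    simp only [ha, hb, i.isLt, dif_pos, Fin.eta]
  rw [h2, hRHS]
  -- hypotheses for vn_key
  have haA : ∀ k, a (k+1) ≤ a k := by
    intro k
    by_cases h1 : k + 1 < r
    · have hk : k < r := by omega
      simp only [ha, dif_pos h1, dif_pos hk]
      exact hσAa (by simp [Fin.le_def])
    · by_cases hk : k < r
      · simp only [ha, dif_neg h1, dif_pos hk]; exact hσA0 _
      · simp only [ha, dif_neg h1, dif_neg hk]; exact le_refl 0
  have hbA : ∀ k, b (k+1) ≤ b k := by
    intro k
    by_cases h1 : k + 1 < r
    · have hk : k < r := by omega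
      simp only [hb, dif_pos h1, dif_pos hk]
      exact hσBa (by simp [Fin.le_def])
    · by_cases hk : k < r
      · simp only [hb, dif_neg h1, dif_pos hk]; exact hσB0 _
      · simp only [hb, dif_neg h1, dif_neg hk]; exact le_refl 0
  have har : a r = 0 := by simp [ha]
  have hbr : b r = 0 := by simp [hb]
  -- row/column bounds for p and q
  have hext : ∀ (M : Matrix (Fin r) (Fin r) ℝ) (g : ℕ → ℕ → ℝ),
      (g = fun i j => if h : i < r ∧ j < r then M ⟨i, h.1⟩ ⟨j, h.2⟩ else 0) →
      (∀ k : Fin r, ∑ l, (M k l)^2 ≤ 1) → (∀ l : Fin r, ∑ k, (M k l)^2 ≤ 1) →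
      (∀ i t, ∑ j ∈ range t, (g i j)^2 ≤ 1) ∧ (∀ j t, ∑ i ∈ range t, (g i j)^2 ≤ 1) := by
    intro M g hg hrow hcol
    have hz : ∀ i j, (r ≤ i ∨ r ≤ j) → g i j = 0 := by
      intro i j hij; rw [hg]; exact dif_neg (by omega)
    constructor
    · refine vn_ext_row r g hz ?_
      intro i hi
      rw [← Fin.sum_univ_eq_sum_range (fun j => (g i j)^2) r]
      calc ∑ j : Fin r, (g i ↑j)^2 = ∑ j : Fin r, (M ⟨i, hi⟩ j)^2 := by
            refine Finset.sum_congr rfl fun j _ => ?_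
            rw [hg]; simp [hi, j.isLt]
        _ ≤ 1 := hrow ⟨i, hi⟩
    · refine vn_ext_row r (fun j i => g i j) (fun i j h => hz j i h.symm) ?_
      intro j hj
      rw [← Fin.sum_univ_eq_sum_range (fun i => (g i j)^2) r]
      calc ∑ i : Fin r, (g ↑i j)^2 = ∑ i : Fin r, (M i ⟨j, hj⟩)^2 := by
            refine Finset.sum_congr rfl fun i _ => ?_
            rw [hg]; simp [hj, i.isLt]
        _ ≤ 1 := hcol ⟨j, hj⟩
  have hProw : ∀ k : Fin r, ∑ l, (P k l)^2 ≤ 1 := vn_bessel UA UB hUA hUB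
  have hPcol : ∀ l : Fin r, ∑ k, (P k l)^2 ≤ 1 := by
    intro l
    have := vn_bessel UB UA hUB hUA l
    calc ∑ k, (P k l)^2 = ∑ k, ((UBᵀ * UA) l k)^2 := by
          refine Finset.sum_congr rfl fun k _ => ?_
          congr 1
          rw [hPdef, show (UAᵀ * UB) k l = (UAᵀ * UB)ᵀ l k from rfl, transpose_mul,
            transpose_transpose]
      _ ≤ 1 := this
  have hQrow : ∀ k : Fin r, ∑ l, (Q k l)^2 ≤ 1 := vn_bessel VA VB hVA hVB
  have hQcol : ∀ l : Fin r, ∑ k, (Q k l)^2 ≤ 1 := by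
    intro l
    have := vn_bessel VB VA hVB hVA l
    calc ∑ k, (Q k l)^2 = ∑ k, ((VBᵀ * VA) l k)^2 := by
          refine Finset.sum_congr rfl fun k _ => ?_
          congr 1
          rw [hQdef, show (VAᵀ * VB) k l = (VAᵀ * VB)ᵀ l k from rfl, transpose_mul,
            transpose_transpose]
      _ ≤ 1 := this
  obtain ⟨hprow, hpcol⟩ := hext P p hp hProw hPcol
  obtain ⟨hqrow, hqcol⟩ := hext Q q hq hQrow hQcol
  -- apply the key lemma
  refine vn_key r a b (fun i j => p i j * q i j) haA hbA har hbr ?_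
  intro k l
  have := vn_block r p q hprow hpcol hqrow hqcol k l
  calc ∑ i ∈ range k, ∑ j ∈ range l, p i j * q i j ≤ (min k l : ℝ) := this
    _ = ((min k l : ℕ) : ℝ) := by push_cast; ring

end VNAux

/-- **Von Neumann trace inequality.** For `A, B ∈ ℝ^{m×n}` with singular values
`σA` and `σB` (in nonincreasing order), `Tr(Aᵀ B) ≤ ∑_{i=1}^{r} σA_i σB_i`
where `r = min(m, n)`. -/
theorem vonNeumann_trace_inequality (m n : ℕ) (A B : Matrix (Fin m) (Fin n) ℝ)
    (UA : Matrix (Fin m) (Fin (min m n)) ℝ) (σA : Fin (min m n) → ℝ)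
    (VA : Matrix (Fin n) (Fin (min m n)) ℝ)
    (UB : Matrix (Fin m) (Fin (min m n)) ℝ) (σB : Fin (min m n) → ℝ)
    (VB : Matrix (Fin n) (Fin (min m n)) ℝ)
    (hA : IsSVD A UA σA VA) (hB : IsSVD B UB σB VB) :
    Matrix.trace (Aᵀ * B) ≤ ∑ i, σA i * σB i := by
  obtain ⟨hUA, hVA, hσA0, hσAa, hAeq⟩ := hA
  obtain ⟨hUB, hVB, hσB0, hσBa, hBeq⟩ := hB
  exact vn_general A B UA σA VA UB σB VB hUA hVA hσA0 hσAa hAeq hUB hVB hσB0 hσBa hBeq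
end

section
/- Let G ∈ ℝ^{m×n} be nonzero with SVD G = U Σ V^T, Σ = diag(σ_1,…,σ_r). Fix q ∈ (1,∞) with conjugate exponent p′ (1/p′ + 1/q = 1) and δ > 0. Then the maximizer of Tr(G^T ΔW) over matrices ΔW with Schatten-q norm at most δ is ΔW* = δ · ‖G‖_{p′}^{-p′/q} · U Σ^{p′-1} V^T, where Σ^{p′-1} = diag(σ_1^{p′-1},…,σ_r^{p′-1}). -/
open Matrix

lemma proj_bound {m r : ℕ} (U : Matrix (Fin m) (Fin r) ℝ) (h : Uᵀ * U = 1) (w : Fin m → ℝ) :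
    ∑ i, (∑ k, U k i * w k) ^ 2 ≤ ∑ k, w k ^ 2 := by
  set v : Fin r → ℝ := fun i => ∑ k, U k i * w k with hv
  set u : Fin m → ℝ := fun k => ∑ i, U k i * v i with hu
  have hUU : ∀ i j, ∑ k, U k i * U k j = if i = j then (1:ℝ) else 0 := by
    intro i j
    have := congrFun (congrFun h i) j
    simpa [Matrix.mul_apply, Matrix.transpose_apply, Matrix.one_apply] using this
  have huu : ∑ k, u k ^ 2 = ∑ i, v i ^ 2 := by
    have : ∀ k, u k ^ 2 = ∑ i, ∑ j, U k i * v i * (U k j * v j) := by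
      intro k
      rw [sq, hu, Finset.sum_mul_sum]
    rw [Finset.sum_congr rfl (fun k _ => this k)]
    rw [Finset.sum_comm]
    have : ∀ i, ∑ k, ∑ j, U k i * v i * (U k j * v j)
        = ∑ j, v i * v j * ∑ k, U k i * U k j := by
      intro i
      rw [Finset.sum_comm]
      exact Finset.sum_congr rfl fun j _ => by rw [Finset.mul_sum]; exact Finset.sum_congr rfl fun k _ => by ring
    rw [Finset.sum_congr rfl (fun i _ => this i)]
    simp [hUU, mul_ite, sq]
  have huw : ∑ k, u k * w k = ∑ i, v i ^ 2 := by
    have : ∀ k, u k * w k = ∑ i, U k i * v i * w k := by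
      intro k; rw [hu, Finset.sum_mul]
    rw [Finset.sum_congr rfl (fun k _ => this k), Finset.sum_comm]
    refine Finset.sum_congr rfl fun i _ => ?_
    rw [sq, hv]
    simp only []
    rw [Finset.mul_sum]
    exact Finset.sum_congr rfl fun k _ => by ring
  have cs := Finset.sum_mul_sq_le_sq_mul_sq Finset.univ u w
  rw [huw, huu] at cs
  set t := ∑ i, v i ^ 2 with ht
  have ht0 : 0 ≤ t := Finset.sum_nonneg fun i _ => sq_nonneg _
  rcases eq_or_lt_of_le ht0 with h0 | h0
  · rw [← h0]; exact Finset.sum_nonneg fun k _ => sq_nonneg _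
  · nlinarith [cs, h0]


lemma telescope (r : ℕ) (f : ℕ → ℝ) (hfr : f r = 0) :
    ∀ i, i ≤ r → f i = ∑ k ∈ Finset.Ico i r, (f k - f (k+1)) := by
  intro i hi
  rw [Finset.sum_Ico_eq_sub _ hi, Finset.sum_range_sub' f, Finset.sum_range_sub' f]
  linarith

lemma abel_sum (r : ℕ) (f c : ℕ → ℝ) (hfr : f r = 0) :
    ∑ i ∈ Finset.range r, f i * c i
      = ∑ k ∈ Finset.range r, (f k - f (k+1)) * ∑ i ∈ Finset.range (k+1), c i := by
  calc ∑ i ∈ Finset.range r, f i * c i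
      = ∑ i ∈ Finset.range r, ∑ k ∈ Finset.Ico i r, (f k - f (k+1)) * c i := by
        refine Finset.sum_congr rfl fun i hi => ?_
        rw [telescope r f hfr i (Finset.mem_range.mp hi).le, Finset.sum_mul]
    _ = ∑ k ∈ Finset.range r, ∑ i ∈ Finset.range (k+1), (f k - f (k+1)) * c i := by
        rw [Finset.range_eq_Ico, Finset.sum_Ico_Ico_comm]
        simp only [Finset.range_eq_Ico]
    _ = _ := Finset.sum_congr rfl fun k _ => by rw [Finset.mul_sum]

lemma substoch (r : ℕ) (Z : ℕ → ℕ → ℝ) (a b : ℕ → ℝ)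
    (hZ : ∀ i j, 0 ≤ Z i j)
    (hrow : ∀ i, ∑ j ∈ Finset.range r, Z i j ≤ 1)
    (hcol : ∀ j, ∑ i ∈ Finset.range r, Z i j ≤ 1)
    (ha' : ∀ k, a (k+1) ≤ a k) (hb' : ∀ k, b (k+1) ≤ b k)
    (har : a r = 0) (hbr : b r = 0) :
    ∑ i ∈ Finset.range r, ∑ j ∈ Finset.range r, a i * b j * Z i j
      ≤ ∑ i ∈ Finset.range r, a i * b i := by
  set α := fun k => a k - a (k+1) with hαdef
  set β := fun l => b l - b (l+1) with hβdef
  have hα : ∀ k, 0 ≤ α k := fun k => sub_nonneg.2 (ha' k)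
  have hβ : ∀ l, 0 ≤ β l := fun l => sub_nonneg.2 (hb' l)
  have L1 : ∑ i ∈ Finset.range r, ∑ j ∈ Finset.range r, a i * b j * Z i j
      = ∑ k ∈ Finset.range r, α k * ∑ l ∈ Finset.range r,
          β l * ∑ j ∈ Finset.range (l+1), ∑ i ∈ Finset.range (k+1), Z i j := by
    have step1 : ∑ i ∈ Finset.range r, ∑ j ∈ Finset.range r, a i * b j * Z i j
        = ∑ i ∈ Finset.range r, a i * (∑ j ∈ Finset.range r, b j * Z i j) := by
      refine Finset.sum_congr rfl fun i _ => ?_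
      rw [Finset.mul_sum]
      exact Finset.sum_congr rfl fun j _ => by ring
    rw [step1, abel_sum r a _ har]
    refine Finset.sum_congr rfl fun k hk => ?_
    congr 1
    have swap1 : ∑ i ∈ Finset.range (k+1), ∑ j ∈ Finset.range r, b j * Z i j
        = ∑ j ∈ Finset.range r, b j * ∑ i ∈ Finset.range (k+1), Z i j := by
      rw [Finset.sum_comm]
      exact Finset.sum_congr rfl fun j _ => by rw [Finset.mul_sum]
    rw [swap1, abel_sum r b _ hbr]
  have R1 : ∑ i ∈ Finset.range r, a i * b i
      = ∑ k ∈ Finset.range r, α k * ∑ l ∈ Finset.range r,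
          β l * min ((k:ℝ)+1) ((l:ℝ)+1) := by
    rw [abel_sum r a b har]
    refine Finset.sum_congr rfl fun k hk => ?_
    have hk' : k + 1 ≤ r := Finset.mem_range.mp hk
    have hb_i : ∀ i, i ≤ r → b i = ∑ l ∈ Finset.Ico i r, β l := telescope r b hbr
    congr 1
    have first : ∑ i ∈ Finset.range (k+1), ∑ l ∈ Finset.Ico i (k+1), β l
        = ∑ l ∈ Finset.range (k+1), ((l:ℝ)+1) * β l := by
      rw [Finset.range_eq_Ico, Finset.sum_Ico_Ico_comm]
      refine Finset.sum_congr rfl fun l _ => ?_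
      rw [Finset.sum_const, nsmul_eq_mul, Nat.card_Ico]
      push_cast
      ring
    have second : ∑ i ∈ Finset.range (k+1), ∑ l ∈ Finset.Ico (k+1) r, β l
        = ∑ l ∈ Finset.Ico (k+1) r, ((k:ℝ)+1) * β l := by
      rw [Finset.sum_const, Finset.card_range, nsmul_eq_mul, Finset.mul_sum]
      refine Finset.sum_congr rfl fun l _ => by push_cast; ring
    have S1 : ∑ i ∈ Finset.range (k+1), b i
        = ∑ l ∈ Finset.range (k+1), ((l:ℝ)+1) * β l
          + ∑ l ∈ Finset.Ico (k+1) r, ((k:ℝ)+1) * β l := by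
      rw [← first, ← second, ← Finset.sum_add_distrib]
      refine Finset.sum_congr rfl fun i hi => ?_
      rw [hb_i i (le_trans (Finset.mem_range.mp hi).le hk'),
        Finset.sum_Ico_consecutive _ (Finset.mem_range.mp hi).le hk']
    have S2 : ∑ l ∈ Finset.range r, β l * min ((k:ℝ)+1) ((l:ℝ)+1)
        = ∑ l ∈ Finset.range (k+1), ((l:ℝ)+1) * β l
          + ∑ l ∈ Finset.Ico (k+1) r, ((k:ℝ)+1) * β l := by
      rw [Finset.range_eq_Ico,
        ← Finset.sum_Ico_consecutive _ (Nat.zero_le (k+1)) hk']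
      congr 1
      · rw [← Finset.range_eq_Ico]
        refine Finset.sum_congr rfl fun l hl => ?_
        have hlk : (l:ℝ) + 1 ≤ (k:ℝ) + 1 :=
          add_le_add_left (Nat.cast_le.mpr (Nat.lt_succ_iff.mp (Finset.mem_range.mp hl))) 1
        rw [min_eq_right hlk]
        ring
      · refine Finset.sum_congr rfl fun l hl => ?_
        have hkl : (k:ℝ) + 1 ≤ (l:ℝ) + 1 :=
          add_le_add_left (Nat.cast_le.mpr (le_of_lt (Finset.mem_Ico.mp hl).1)) 1
        rw [min_eq_left hkl]
        ring
    rw [S1, S2]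
  rw [L1, R1]
  refine Finset.sum_le_sum fun k hk => ?_
  refine mul_le_mul_of_nonneg_left (Finset.sum_le_sum fun l hl => ?_) (hα k)
  refine mul_le_mul_of_nonneg_left ?_ (hβ l)
  have hk' : k + 1 ≤ r := Finset.mem_range.mp hk
  have hl' : l + 1 ≤ r := Finset.mem_range.mp hl
  have bound1 : ∑ j ∈ Finset.range (l+1), ∑ i ∈ Finset.range (k+1), Z i j ≤ (l:ℝ)+1 := by
    calc ∑ j ∈ Finset.range (l+1), ∑ i ∈ Finset.range (k+1), Z i j
        ≤ ∑ j ∈ Finset.range (l+1), (1:ℝ) := by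
          refine Finset.sum_le_sum fun j _ => ?_
          calc ∑ i ∈ Finset.range (k+1), Z i j
              ≤ ∑ i ∈ Finset.range r, Z i j :=
                Finset.sum_le_sum_of_subset_of_nonneg
                  (Finset.range_subset_range.mpr hk') (fun i _ _ => hZ i j)
            _ ≤ 1 := hcol j
      _ = (l:ℝ)+1 := by rw [Finset.sum_const, Finset.card_range, nsmul_eq_mul]; push_cast; ring
  have bound2 : ∑ j ∈ Finset.range (l+1), ∑ i ∈ Finset.range (k+1), Z i j ≤ (k:ℝ)+1 := by
    rw [Finset.sum_comm]
    calc ∑ i ∈ Finset.range (k+1), ∑ j ∈ Finset.range (l+1), Z i j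
        ≤ ∑ i ∈ Finset.range (k+1), (1:ℝ) := by
          refine Finset.sum_le_sum fun i _ => ?_
          calc ∑ j ∈ Finset.range (l+1), Z i j
              ≤ ∑ j ∈ Finset.range r, Z i j :=
                Finset.sum_le_sum_of_subset_of_nonneg
                  (Finset.range_subset_range.mpr hl') (fun j _ _ => hZ i j)
            _ ≤ 1 := hrow i
      _ = (k:ℝ)+1 := by rw [Finset.sum_const, Finset.card_range, nsmul_eq_mul]; push_cast; ring
  exact le_min bound2 bound1

lemma fin_sum_conv {r : ℕ} (g : Fin r → ℝ) (g' : ℕ → ℝ)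
    (h : ∀ i : Fin r, g' i.val = g i) :
    ∑ i, g i = ∑ i ∈ Finset.range r, g' i := by
  rw [← Fin.sum_univ_eq_sum_range]
  exact Finset.sum_congr rfl fun i _ => (h i).symm

lemma substoch_fin {r : ℕ} (Z : Fin r → Fin r → ℝ) (a b : Fin r → ℝ)
    (hZ : ∀ i j, 0 ≤ Z i j)
    (hrow : ∀ i, ∑ j, Z i j ≤ 1) (hcol : ∀ j, ∑ i, Z i j ≤ 1)
    (ha0 : ∀ i, 0 ≤ a i) (hb0 : ∀ i, 0 ≤ b i)
    (ha : Antitone a) (hb : Antitone b) :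
    ∑ i, ∑ j, a i * b j * Z i j ≤ ∑ i, a i * b i := by
  classical
  set a' : ℕ → ℝ := fun i => if h : i < r then a ⟨i, h⟩ else 0 with ha'def
  set b' : ℕ → ℝ := fun i => if h : i < r then b ⟨i, h⟩ else 0 with hb'def
  set Z' : ℕ → ℕ → ℝ :=
    fun i j => if h : i < r ∧ j < r then Z ⟨i, h.1⟩ ⟨j, h.2⟩ else 0 with hZ'def
  have ea : ∀ i : Fin r, a' i.val = a i := fun i => by simp [ha'def, i.isLt]
  have eb : ∀ i : Fin r, b' i.val = b i := fun i => by simp [hb'def, i.isLt]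
  have eZ : ∀ i j : Fin r, Z' i.val j.val = Z i j := fun i j => by
    simp [hZ'def, i.isLt, j.isLt]
  have hZ' : ∀ i j, 0 ≤ Z' i j := by
    intro i j
    by_cases h : i < r ∧ j < r
    · rw [hZ'def]; simpa [h] using hZ ⟨i, h.1⟩ ⟨j, h.2⟩
    · simp [hZ'def, h]
  have hrow' : ∀ i, ∑ j ∈ Finset.range r, Z' i j ≤ 1 := by
    intro i
    by_cases h : i < r
    · have : ∑ j ∈ Finset.range r, Z' i j = ∑ j, Z (⟨i, h⟩ : Fin r) j := by
        rw [fin_sum_conv (fun j => Z ⟨i, h⟩ j) (fun j => Z' i j)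
          (fun j => by simp [hZ'def, h, j.isLt])]
      rw [this]; exact hrow _
    · have : ∑ j ∈ Finset.range r, Z' i j = 0 :=
        Finset.sum_eq_zero fun j _ => by simp [hZ'def, h]
      rw [this]; norm_num
  have hcol' : ∀ j, ∑ i ∈ Finset.range r, Z' i j ≤ 1 := by
    intro j
    by_cases h : j < r
    · have : ∑ i ∈ Finset.range r, Z' i j = ∑ i, Z i (⟨j, h⟩ : Fin r) := by
        rw [fin_sum_conv (fun i => Z i ⟨j, h⟩) (fun i => Z' i j)
          (fun i => by simp [hZ'def, h, i.isLt])]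
      rw [this]; exact hcol _
    · have : ∑ i ∈ Finset.range r, Z' i j = 0 :=
        Finset.sum_eq_zero fun i _ => by simp [hZ'def, h]
      rw [this]; norm_num
  have mono : ∀ (c : Fin r → ℝ) (c' : ℕ → ℝ),
      c' = (fun i => if h : i < r then c ⟨i, h⟩ else 0) →
      (∀ i, 0 ≤ c i) → Antitone c → ∀ k, c' (k+1) ≤ c' k := by
    intro c c' hc hc0 hcanti k
    by_cases h1 : k + 1 < r
    · have h0 : k < r := Nat.lt_of_succ_lt h1
      rw [hc]
      simp only [h1, h0, dif_pos]
      exact hcanti (Fin.mk_le_mk.mpr (Nat.le_succ k))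
    · by_cases h0 : k < r
      · rw [hc]; simp only [h1, h0, dif_pos, dif_neg]
        simpa using hc0 ⟨k, h0⟩
      · rw [hc]; simp [h1, h0]
  have ha'' := mono a a' ha'def ha0 ha
  have hb'' := mono b b' hb'def hb0 hb
  have har : a' r = 0 := by simp [ha'def]
  have hbr : b' r = 0 := by simp [hb'def]
  have key := substoch r Z' a' b' hZ' hrow' hcol' ha'' hb'' har hbr
  have lhs_eq : ∑ i, ∑ j, a i * b j * Z i j
      = ∑ i ∈ Finset.range r, ∑ j ∈ Finset.range r, a' i * b' j * Z' i j := by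
    refine fin_sum_conv _ _ (fun i => ?_)
    show ∑ j ∈ Finset.range r, a' i.val * b' j * Z' i.val j
        = ∑ j, a i * b j * Z i j
    refine (fin_sum_conv _ _ (fun j => ?_)).symm
    show a' i.val * b' j.val * Z' i.val j.val = a i * b j * Z i j
    rw [ea, eb, eZ]
  have rhs_eq : ∑ i, a i * b i = ∑ i ∈ Finset.range r, a' i * b' i := by
    refine fin_sum_conv _ _ (fun i => ?_)
    show a' i.val * b' i.val = a i * b i
    rw [ea, eb]
  rw [lhs_eq, rhs_eq]
  exact key

lemma trace_expand {r n : ℕ} (A : Matrix (Fin r) (Fin n) ℝ) (B : Matrix (Fin n) (Fin r) ℝ) :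
    Matrix.trace (A * B) = ∑ i, ∑ j, A i j * B j i := by
  simp [Matrix.trace, Matrix.diag, Matrix.mul_apply]

/-- **Schatten-q constrained steepest ascent.** Let `G ≠ 0` have SVD `G = U Σ Vᵀ`,
let `q ∈ (1, ∞)` with conjugate exponent `p'` (`1/p' + 1/q = 1`) and `δ > 0`.
Then `ΔW* = δ ‖G‖_{p'}^{-p'/q} U Σ^{p'-1} Vᵀ` has Schatten-q norm exactly `δ`
and maximizes `Tr(Gᵀ ΔW)` over all `ΔW` of Schatten-q norm at most `δ`. -/
theorem schatten_q_constrained_maximizer (m n : ℕ) (G : Matrix (Fin m) (Fin n) ℝ)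
    (hG : G ≠ 0)
    (U : Matrix (Fin m) (Fin (min m n)) ℝ) (σ : Fin (min m n) → ℝ)
    (V : Matrix (Fin n) (Fin (min m n)) ℝ) (hsvd : IsSVD G U σ V)
    (q p' δ : ℝ) (hq : 1 < q) (hconj : 1 / p' + 1 / q = 1) (hδ : 0 < δ) :
    (∑ i, ((δ / ((∑ i, σ i ^ p') ^ (1 / p')) ^ (p' / q)) * σ i ^ (p' - 1)) ^ q) ^ (1 / q)
        = δ ∧
    ∀ (ΔW : Matrix (Fin m) (Fin n) ℝ)
      (UW : Matrix (Fin m) (Fin (min m n)) ℝ) (σW : Fin (min m n) → ℝ)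
      (VW : Matrix (Fin n) (Fin (min m n)) ℝ),
      IsSVD ΔW UW σW VW → (∑ i, σW i ^ q) ^ (1 / q) ≤ δ →
      Matrix.trace (Gᵀ * ΔW) ≤
        Matrix.trace (Gᵀ *
          ((δ / ((∑ i, σ i ^ p') ^ (1 / p')) ^ (p' / q)) •
            (U * Matrix.diagonal (fun i => σ i ^ (p' - 1)) * Vᵀ))) := by
  obtain ⟨hU, hV, hσ0, hσanti, hGdef⟩ := hsvd
  have hq0 : (0:ℝ) < q := lt_trans one_pos hq
  have hq0' : q ≠ 0 := ne_of_gt hq0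
  have hqinv : (0:ℝ) < 1/q := by positivity
  have hqinv1 : 1/q < 1 := by rw [div_lt_one hq0]; exact hq
  have hp'inv : (0:ℝ) < 1/p' := by linarith
  have hp'pos : 0 < p' := one_div_pos.mp hp'inv
  have hp'ne : p' ≠ 0 := ne_of_gt hp'pos
  have hp'1 : 1 < p' := (div_lt_one hp'pos).mp (by linarith)
  have hpq : Real.HolderConjugate p' q :=
    Real.holderConjugate_iff.mpr ⟨hp'1, by rw [← one_div, ← one_div]; exact hconj⟩
  set s := ∑ i, σ i ^ p' with hs_def
  have hterm : ∀ i, (0:ℝ) ≤ σ i ^ p' := fun i => Real.rpow_nonneg (hσ0 i) _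
  have hs_pos : 0 < s := by
    have hex : ∃ i, σ i ≠ 0 := by
      by_contra hc
      push_neg at hc
      apply hG
      have hz : σ = fun _ => 0 := funext hc
      rw [hGdef, hz]
      simp [Matrix.diagonal_zero]
    obtain ⟨i, hi⟩ := hex
    refine Finset.sum_pos' (fun i _ => hterm i) ⟨i, Finset.mem_univ i, ?_⟩
    exact Real.rpow_pos_of_pos (lt_of_le_of_ne (hσ0 i) (Ne.symm hi)) _
  have hE : (s ^ (1/p')) ^ (p'/q) = s ^ (1/q) := by
    rw [← Real.rpow_mul hs_pos.le]
    congr 1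
    field_simp
  rw [hE]
  have hsq_pos : (0:ℝ) < s ^ (1/q) := Real.rpow_pos_of_pos hs_pos _
  set c := δ / s ^ (1/q) with hc_def
  have hc_pos : 0 < c := div_pos hδ hsq_pos
  have hpq2 : (p' - 1) * q = p' := by
    have h1 : q + p' = p' * q := by
      field_simp at hconj
      linarith
    have h2 : (p'-1) * q = p' * q - q := by ring
    linarith
  constructor
  · -- norm of the maximizer is δ
    have hterm2 : ∀ i : Fin (min m n), (c * σ i ^ (p'-1)) ^ q = c ^ q * σ i ^ p' := by
      intro i
      rw [Real.mul_rpow hc_pos.le (Real.rpow_nonneg (hσ0 i) _),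
        ← Real.rpow_mul (hσ0 i), hpq2]
    calc (∑ i, (c * σ i ^ (p'-1)) ^ q) ^ (1/q)
        = (c ^ q * s) ^ (1/q) := by
          rw [Finset.sum_congr rfl fun i _ => hterm2 i, ← Finset.mul_sum]
      _ = c * s ^ (1/q) := by
          rw [Real.mul_rpow (Real.rpow_nonneg hc_pos.le _) (Finset.sum_nonneg fun i _ => hterm i),
            ← Real.rpow_mul hc_pos.le, mul_one_div_cancel hq0', Real.rpow_one]
      _ = δ := by rw [hc_def]; field_simp
  · -- maximality
    intro ΔW UW σW VW hsvdW hWnorm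
    obtain ⟨hUW, hVW, hσW0, hσWanti, hWdef⟩ := hsvdW
    have hGT : Gᵀ = V * Matrix.diagonal σ * Uᵀ := by
      rw [hGdef, Matrix.transpose_mul, Matrix.transpose_mul, Matrix.transpose_transpose,
        Matrix.diagonal_transpose, Matrix.mul_assoc]
    -- value at the maximizer
    have trace_max : Matrix.trace (Gᵀ *
        (c • (U * Matrix.diagonal (fun i => σ i ^ (p'-1)) * Vᵀ))) = c * s := by
      rw [Matrix.mul_smul, Matrix.trace_smul, smul_eq_mul]
      congr 1
      have h1 : Gᵀ * (U * Matrix.diagonal (fun i => σ i ^ (p'-1)) * Vᵀ)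
          = V * (Matrix.diagonal σ *
              (Matrix.diagonal (fun i => σ i ^ (p'-1)) * Vᵀ)) := by
        rw [hGT]
        simp only [Matrix.mul_assoc]
        rw [← Matrix.mul_assoc Uᵀ U, hU, Matrix.one_mul]
      rw [h1, Matrix.trace_mul_comm]
      simp only [Matrix.mul_assoc]
      rw [hV, Matrix.mul_one, Matrix.diagonal_mul_diagonal, Matrix.trace_diagonal]
      refine Finset.sum_congr rfl fun i _ => ?_
      rw [show p' = 1 + (p'-1) by ring, Real.rpow_add' (hσ0 i) (by
        rw [show (1:ℝ) + (p'-1) = p' by ring]; exact hp'ne), Real.rpow_one]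
      ring
    rw [trace_max]
    -- expand trace (Gᵀ * ΔW)
    set X := Uᵀ * UW with hX_def
    set Y := Vᵀ * VW with hY_def
    have trace_eq : Matrix.trace (Gᵀ * ΔW)
        = ∑ i, ∑ j, σ i * X i j * σW j * Y i j := by
      have h1 : Gᵀ * ΔW
          = V * (Matrix.diagonal σ * (X * (Matrix.diagonal σW * VWᵀ))) := by
        rw [hGT, hWdef]
        simp only [Matrix.mul_assoc]
        rw [← Matrix.mul_assoc Uᵀ UW]
      rw [h1, Matrix.trace_mul_comm]
      simp only [Matrix.mul_assoc]
      have hYt : VWᵀ * V = Yᵀ := by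
        rw [hY_def, Matrix.transpose_mul, Matrix.transpose_transpose]
      rw [hYt]
      rw [← Matrix.mul_assoc (Matrix.diagonal σ) X,
        ← Matrix.mul_assoc (Matrix.diagonal σ * X) (Matrix.diagonal σW)]
      rw [trace_expand]
      refine Finset.sum_congr rfl fun i _ => Finset.sum_congr rfl fun j _ => ?_
      rw [Matrix.mul_diagonal, Matrix.diagonal_mul, Matrix.transpose_apply]
    rw [trace_eq]
    -- orthogonality consequences
    have hUdiag : ∀ i : Fin (min m n), ∑ k, U k i ^ 2 = 1 := by
      intro i
      have := congrFun (congrFun hU i) i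
      simp only [Matrix.mul_apply, Matrix.transpose_apply, Matrix.one_apply_eq] at this
      rw [← this]
      exact Finset.sum_congr rfl fun k _ => pow_two (U k i)
    have hVdiag : ∀ i : Fin (min m n), ∑ k, V k i ^ 2 = 1 := by
      intro i
      have := congrFun (congrFun hV i) i
      simp only [Matrix.mul_apply, Matrix.transpose_apply, Matrix.one_apply_eq] at this
      rw [← this]
      exact Finset.sum_congr rfl fun k _ => pow_two _
    have hUWdiag : ∀ i : Fin (min m n), ∑ k, UW k i ^ 2 = 1 := by
      intro i
      have := congrFun (congrFun hUW i) i
      simp only [Matrix.mul_apply, Matrix.transpose_apply, Matrix.one_apply_eq] at this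
      rw [← this]
      exact Finset.sum_congr rfl fun k _ => pow_two _
    have hVWdiag : ∀ i : Fin (min m n), ∑ k, VW k i ^ 2 = 1 := by
      intro i
      have := congrFun (congrFun hVW i) i
      simp only [Matrix.mul_apply, Matrix.transpose_apply, Matrix.one_apply_eq] at this
      rw [← this]
      exact Finset.sum_congr rfl fun k _ => pow_two _
    have hrowX : ∀ i, ∑ j, X i j ^ 2 ≤ 1 := by
      intro i
      have hb := proj_bound UW hUW (fun k => U k i)
      calc ∑ j, X i j ^ 2 = ∑ j, (∑ k, UW k j * U k i) ^ 2 := by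
            refine Finset.sum_congr rfl fun j _ => ?_
            rw [hX_def]
            simp only [Matrix.mul_apply, Matrix.transpose_apply]
            congr 1
            exact Finset.sum_congr rfl fun k _ => mul_comm _ _
        _ ≤ ∑ k, U k i ^ 2 := hb
        _ = 1 := hUdiag i
    have hcolX : ∀ j, ∑ i, X i j ^ 2 ≤ 1 := by
      intro j
      have hb := proj_bound U hU (fun k => UW k j)
      calc ∑ i, X i j ^ 2 = ∑ i, (∑ k, U k i * UW k j) ^ 2 := by
            refine Finset.sum_congr rfl fun i _ => ?_
            rw [hX_def]
            simp only [Matrix.mul_apply, Matrix.transpose_apply]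
        _ ≤ ∑ k, UW k j ^ 2 := hb
        _ = 1 := hUWdiag j
    have hrowY : ∀ i, ∑ j, Y i j ^ 2 ≤ 1 := by
      intro i
      have hb := proj_bound VW hVW (fun k => V k i)
      calc ∑ j, Y i j ^ 2 = ∑ j, (∑ k, VW k j * V k i) ^ 2 := by
            refine Finset.sum_congr rfl fun j _ => ?_
            rw [hY_def]
            simp only [Matrix.mul_apply, Matrix.transpose_apply]
            congr 1
            exact Finset.sum_congr rfl fun k _ => mul_comm _ _
        _ ≤ ∑ k, V k i ^ 2 := hb
        _ = 1 := hVdiag i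
    have hcolY : ∀ j, ∑ i, Y i j ^ 2 ≤ 1 := by
      intro j
      have hb := proj_bound V hV (fun k => VW k j)
      calc ∑ i, Y i j ^ 2 = ∑ i, (∑ k, V k i * VW k j) ^ 2 := by
            refine Finset.sum_congr rfl fun i _ => ?_
            rw [hY_def]
            simp only [Matrix.mul_apply, Matrix.transpose_apply]
        _ ≤ ∑ k, VW k j ^ 2 := hb
        _ = 1 := hVWdiag j
    -- von Neumann bound
    have hXsub := substoch_fin (fun i j => X i j ^ 2) σ σW
      (fun i j => sq_nonneg _) hrowX hcolX hσ0 hσW0 hσanti hσWanti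
    have hYsub := substoch_fin (fun i j => Y i j ^ 2) σ σW
      (fun i j => sq_nonneg _) hrowY hcolY hσ0 hσW0 hσanti hσWanti
    have vn : ∑ i, ∑ j, σ i * X i j * σW j * Y i j ≤ ∑ i, σ i * σW i := by
      have mid : ∑ i, ∑ j, σ i * X i j * σW j * Y i j
          ≤ (∑ i, ∑ j, σ i * σW j * X i j ^ 2) / 2
            + (∑ i, ∑ j, σ i * σW j * Y i j ^ 2) / 2 := by
        rw [Finset.sum_div, Finset.sum_div, ← Finset.sum_add_distrib]
        refine Finset.sum_le_sum fun i _ => ?_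
        rw [Finset.sum_div, Finset.sum_div, ← Finset.sum_add_distrib]
        refine Finset.sum_le_sum fun j _ => ?_
        have h2 : X i j * Y i j ≤ (X i j ^ 2 + Y i j ^ 2) / 2 := by
          nlinarith [sq_nonneg (X i j - Y i j)]
        have h3 : (0:ℝ) ≤ σ i * σW j := mul_nonneg (hσ0 i) (hσW0 j)
        nlinarith [mul_le_mul_of_nonneg_left h2 h3]
      have e1 : (∑ i, ∑ j, σ i * σW j * X i j ^ 2) ≤ ∑ i, σ i * σW i := hXsub
      have e2 : (∑ i, ∑ j, σ i * σW j * Y i j ^ 2) ≤ ∑ i, σ i * σW i := hYsub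
      linarith
    -- Hölder
    have hold : ∑ i, σ i * σW i ≤ s ^ (1/p') * (∑ i, σW i ^ q) ^ (1/q) :=
      Real.inner_le_Lp_mul_Lq_of_nonneg Finset.univ hpq
        (fun i _ => hσ0 i) (fun i _ => hσW0 i)
    have hfinal : s ^ (1/p') * (∑ i, σW i ^ q) ^ (1/q) ≤ s ^ (1/p') * δ :=
      mul_le_mul_of_nonneg_left hWnorm (Real.rpow_nonneg hs_pos.le _)
    have hcs : c * s = s ^ (1/p') * δ := by
      have h1 : s ^ (1/p') = s / s ^ (1/q) := by
        rw [show 1/p' = 1 - 1/q by linarith, Real.rpow_sub hs_pos, Real.rpow_one]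
      rw [hc_def, h1]
      field_simp
    rw [hcs]
    linarith
end

section
/- Let f be L-smooth (Frobenius), M ∈ ℝ^{m×n}, ρ(M) = U Σ^p V^T, η = ⟨M, ρ(M)⟩/(L‖ρ(M)‖_F^2), and ε′ ∈ (0,1). Then f(W) − f(W − η ρ(M)) ≥ (1−ε′)/(2L) · ⟨M, ρ(M)⟩^2/‖ρ(M)‖_F^2 − ‖M − ∇f(W)‖_F^2/(2Lε′). -/
open Matrix

attribute [local instance] Matrix.normedAddCommGroup Matrix.normedSpace

/-- Squared Frobenius norm, `‖A‖_F² = ∑_{i,j} A_{ij}²`. -/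
noncomputable def frobSq {m n : ℕ} (A : Matrix (Fin m) (Fin n) ℝ) : ℝ :=
  ∑ i, ∑ j, (A i j) ^ (2 : ℕ)

/-- Frobenius norm. -/
noncomputable def fnorm {m n : ℕ} (A : Matrix (Fin m) (Fin n) ℝ) : ℝ :=
  Real.sqrt (frobSq A)

/-- The continuous linear map `X ↦ Tr(Aᵀ X) = ⟨A, X⟩` given by the Frobenius
inner product against `A`. -/
noncomputable def traceCLM {m n : ℕ} (A : Matrix (Fin m) (Fin n) ℝ) :
    Matrix (Fin m) (Fin n) ℝ →L[ℝ] ℝ :=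
  LinearMap.toContinuousLinearMap
    { toFun := fun X => Matrix.trace (Aᵀ * X)
      map_add' := by intro X Y; simp [Matrix.mul_add]
      map_smul' := by intro c X; simp [Matrix.mul_smul] }

lemma frobSq_nonneg {m n : ℕ} (A : Matrix (Fin m) (Fin n) ℝ) : 0 ≤ frobSq A := by
  apply Finset.sum_nonneg; intro i _; apply Finset.sum_nonneg; intro j _; positivity

lemma frobSq_pos {m n : ℕ} (A : Matrix (Fin m) (Fin n) ℝ) (hA : A ≠ 0) : 0 < frobSq A := by
  rcases (frobSq_nonneg A).lt_or_eq with h | h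
  · exact h
  · exfalso; apply hA
    ext i j
    have h1 : ∀ i ∈ Finset.univ, (0:ℝ) ≤ ∑ j, (A i j)^(2:ℕ) := by
      intro i _; apply Finset.sum_nonneg; intro j _; positivity
    have h2 := (Finset.sum_eq_zero_iff_of_nonneg h1).mp h.symm i (Finset.mem_univ i)
    have h3 : ∀ j ∈ Finset.univ, (0:ℝ) ≤ (A i j)^(2:ℕ) := by intro j _; positivity
    have h4 := (Finset.sum_eq_zero_iff_of_nonneg h3).mp h2 j (Finset.mem_univ j)
    simpa using pow_eq_zero_iff (n := 2) (by norm_num) |>.mp h4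

lemma fnorm_nonneg {m n : ℕ} (A : Matrix (Fin m) (Fin n) ℝ) : 0 ≤ fnorm A := Real.sqrt_nonneg _

lemma fnorm_sq {m n : ℕ} (A : Matrix (Fin m) (Fin n) ℝ) : fnorm A * fnorm A = frobSq A :=
  Real.mul_self_sqrt (frobSq_nonneg A)

lemma trace_transpose_mul_eq {m n : ℕ} (A B : Matrix (Fin m) (Fin n) ℝ) :
    Matrix.trace (Aᵀ * B) = ∑ p : (Fin n) × (Fin m), A p.2 p.1 * B p.2 p.1 := by
  rw [Fintype.sum_prod_type]
  simp [Matrix.trace, Matrix.mul_apply, Matrix.diag]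

lemma trace_sq_le {m n : ℕ} (A B : Matrix (Fin m) (Fin n) ℝ) :
    (Matrix.trace (Aᵀ * B)) ^ (2:ℕ) ≤ frobSq A * frobSq B := by
  rw [trace_transpose_mul_eq]
  have hA : frobSq A = ∑ p : (Fin n) × (Fin m), (A p.2 p.1) ^ (2:ℕ) := by
    rw [Fintype.sum_prod_type, frobSq, Finset.sum_comm]
  have hB : frobSq B = ∑ p : (Fin n) × (Fin m), (B p.2 p.1) ^ (2:ℕ) := by
    rw [Fintype.sum_prod_type, frobSq, Finset.sum_comm]
  rw [hA, hB]
  exact Finset.sum_mul_sq_le_sq_mul_sq _ _ _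

lemma trace_le_fnorm {m n : ℕ} (A B : Matrix (Fin m) (Fin n) ℝ) :
    Matrix.trace (Aᵀ * B) ≤ fnorm A * fnorm B := by
  have h := trace_sq_le A B
  have h2 : Matrix.trace (Aᵀ * B) ≤ |Matrix.trace (Aᵀ * B)| := le_abs_self _
  calc Matrix.trace (Aᵀ * B) ≤ Real.sqrt ((Matrix.trace (Aᵀ * B))^(2:ℕ)) := by
        rw [Real.sqrt_sq_eq_abs]; exact h2
    _ ≤ Real.sqrt (frobSq A * frobSq B) := Real.sqrt_le_sqrt h
    _ = fnorm A * fnorm B := Real.sqrt_mul (frobSq_nonneg A) _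

lemma frobSq_smul {m n : ℕ} (c : ℝ) (A : Matrix (Fin m) (Fin n) ℝ) :
    frobSq (c • A) = c^(2:ℕ) * frobSq A := by
  simp [frobSq, Finset.mul_sum, mul_pow]

lemma fnorm_smul {m n : ℕ} (c : ℝ) (A : Matrix (Fin m) (Fin n) ℝ) :
    fnorm (c • A) = |c| * fnorm A := by
  rw [fnorm, frobSq_smul, Real.sqrt_mul (by positivity), Real.sqrt_sq_eq_abs, fnorm]

lemma descent {m n : ℕ}
    (f : Matrix (Fin m) (Fin n) ℝ → ℝ) (gradf : Matrix (Fin m) (Fin n) ℝ → Matrix (Fin m) (Fin n) ℝ)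
    (L : ℝ) (hL : 0 < L)
    (hderiv : ∀ W, HasFDerivAt f (traceCLM (gradf W)) W)
    (hlip : ∀ W W', fnorm (gradf W - gradf W') ≤ L * fnorm (W - W'))
    (x v : Matrix (Fin m) (Fin n) ℝ) :
    f (x + v) ≤ f x + Matrix.trace ((gradf x)ᵀ * v) + L / 2 * frobSq v := by
  set ψ : ℝ → ℝ := fun t => Matrix.trace ((gradf (x + t • v))ᵀ * v) with hψ
  have hline : ∀ t : ℝ, HasDerivAt (fun s : ℝ => x + s • v) v t := by
    intro t
    exact (((hasDerivAt_id t).smul_const v).const_add x).congr_deriv (one_smul ℝ v)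
  have hφ : ∀ t : ℝ, HasDerivAt (fun s : ℝ => f (x + s • v)) (ψ t) t := by
    intro t
    have h := (hderiv (x + t • v)).comp_hasDerivAt t (hline t)
    exact h
  set c : ℝ := L / 2 * frobSq v with hc
  set χ : ℝ → ℝ := fun t => f x + ψ 0 * t + c * t^2 - f (x + t • v) with hχdef
  have hχ : ∀ t : ℝ, HasDerivAt χ (ψ 0 + 2 * c * t - ψ t) t := by
    intro t
    have h1 : HasDerivAt (fun t : ℝ => f x + ψ 0 * t + c * t^2) (ψ 0 + 2 * c * t) t := by
      have := (((hasDerivAt_id t).const_mul (ψ 0)).const_add (f x)).add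
        (((hasDerivAt_pow 2 t)).const_mul c)
      exact this.congr_deriv (by
        show ψ 0 * 1 + c * (((2:ℕ):ℝ) * t ^ 1) = ψ 0 + 2 * c * t
        push_cast; ring)
    exact h1.sub (hφ t)
  have hkey : ∀ t : ℝ, 0 ≤ t → ψ t - ψ 0 ≤ L * frobSq v * t := by
    intro t ht
    have h1 : ψ t - ψ 0 = Matrix.trace ((gradf (x + t • v) - gradf (x + (0:ℝ) • v))ᵀ * v) := by
      simp [hψ, Matrix.transpose_sub, Matrix.sub_mul]
    rw [h1]
    calc Matrix.trace ((gradf (x + t • v) - gradf (x + (0:ℝ) • v))ᵀ * v)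
        ≤ fnorm (gradf (x + t • v) - gradf (x + (0:ℝ) • v)) * fnorm v := trace_le_fnorm _ _
      _ ≤ (L * fnorm ((x + t • v) - (x + (0:ℝ) • v))) * fnorm v := by
          apply mul_le_mul_of_nonneg_right (hlip _ _) (fnorm_nonneg v)
      _ = L * frobSq v * t := by
          have : (x + t • v) - (x + (0:ℝ) • v) = t • v := by
            simp
          rw [this, fnorm_smul, abs_of_nonneg ht, ← fnorm_sq]
          ring
  have hdiff : Differentiable ℝ χ := fun t => (hχ t).differentiableAt
  have hmono : MonotoneOn χ (Set.Icc 0 1) := by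
    apply monotoneOn_of_deriv_nonneg (convex_Icc 0 1) hdiff.continuous.continuousOn
      hdiff.differentiableOn
    intro t ht
    rw [interior_Icc] at ht
    rw [(hχ t).deriv]
    have := hkey t (le_of_lt ht.1)
    simp only [hc]
    nlinarith [this]
  have h01 := hmono (Set.mem_Icc.mpr ⟨le_refl 0, zero_le_one⟩)
    (Set.mem_Icc.mpr ⟨zero_le_one, le_refl 1⟩) zero_le_one
  have hχ0 : χ 0 = 0 := by simp [hχdef]
  have hχ1 : χ 1 = f x + ψ 0 + c - f (x + v) := by simp [hχdef]
  have hψ0 : ψ 0 = Matrix.trace ((gradf x)ᵀ * v) := by simp [hψ]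
  rw [hχ0, hχ1, hψ0] at h01
  linarith [h01]

theorem htmuon_one_step_progress_aux (m n : ℕ)
    (f : Matrix (Fin m) (Fin n) ℝ → ℝ) (gradf : Matrix (Fin m) (Fin n) ℝ → Matrix (Fin m) (Fin n) ℝ)
    (L : ℝ) (hL : 0 < L)
    (hderiv : ∀ W, HasFDerivAt f (traceCLM (gradf W)) W)
    (hlip : ∀ W W', fnorm (gradf W - gradf W') ≤ L * fnorm (W - W'))
    (M : Matrix (Fin m) (Fin n) ℝ)
    (ρM : Matrix (Fin m) (Fin n) ℝ) (hρ0 : ρM ≠ 0)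
    (η : ℝ) (hη : η = Matrix.trace (Mᵀ * ρM) / (L * frobSq ρM))
    (ε' : ℝ) (hε' : ε' ∈ Set.Ioo (0 : ℝ) 1) :
    ∀ W, f W - f (W - η • ρM) ≥
      (1 - ε') / (2 * L) * ((Matrix.trace (Mᵀ * ρM)) ^ (2 : ℕ) / frobSq ρM) -
        frobSq (M - gradf W) / (2 * L * ε') := by
  intro W
  obtain ⟨hε1, hε2⟩ := hε'
  set t := Matrix.trace (Mᵀ * ρM) with ht
  set S := frobSq ρM with hSdef
  have hS : 0 < S := frobSq_pos ρM hρ0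
  set D := frobSq (M - gradf W) with hDdef
  have hD : 0 ≤ D := frobSq_nonneg _
  set s := Matrix.trace ((M - gradf W)ᵀ * ρM) with hs
  have hs2 : s ^ (2:ℕ) ≤ D * S := trace_sq_le _ _
  have hd := descent f gradf L hL hderiv hlip W (-(η • ρM))
  have he : W + -(η • ρM) = W - η • ρM := by rw [sub_eq_add_neg]
  rw [he] at hd
  have htr : Matrix.trace ((gradf W)ᵀ * -(η • ρM)) = -η * (t - s) := by
    have hgsplit : Matrix.trace ((gradf W)ᵀ * ρM) = t - s := by
      rw [ht, hs, Matrix.transpose_sub, Matrix.sub_mul, Matrix.trace_sub]; ring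
    have : -(η • ρM) = (-η) • ρM := by rw [neg_smul]
    rw [this, Matrix.mul_smul, Matrix.trace_smul, smul_eq_mul, hgsplit]
  have hfr : frobSq (-(η • ρM)) = η^(2:ℕ) * S := by
    have : -(η • ρM) = (-η) • ρM := by rw [neg_smul]
    rw [this, frobSq_smul, hSdef]; ring
  rw [htr, hfr] at hd
  have h1 : f W - f (W - η • ρM) ≥ η * (t - s) - L / 2 * (η^(2:ℕ) * S) := by linarith
  have h2 : η * (t - s) - L / 2 * (η^(2:ℕ) * S) ≥
      (1 - ε') / (2 * L) * (t ^ (2:ℕ) / S) - D / (2 * L * ε') := by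
    rw [hη]
    rw [ge_iff_le, div_pow, ← sub_nonneg]
    have hLS : (0:ℝ) < L * S := by positivity
    have key : t / (L * S) * (t - s) - L / 2 * (t ^ 2 / (L * S) ^ 2 * S) -
        ((1 - ε') / (2 * L) * (t ^ 2 / S) - D / (2 * L * ε')) =
        (ε' * t - s)^2 / (2 * L * S * ε') + (D * S - s^2) / (2 * L * S * ε') := by
      field_simp
      ring
    rw [key]
    have hnum : (0:ℝ) ≤ (ε' * t - s)^2 := sq_nonneg _
    have hden : (0:ℝ) < 2 * L * S * ε' := by positivity
    have : (0:ℝ) ≤ D * S - s^2 := by nlinarith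
    positivity
  linarith


/-- **One-step HTMuon progress bound with Young's inequality.** Under the same
setting as the one-step descent bound, for any `ε' ∈ (0,1)`:
`f(W) − f(W − η ρ(M)) ≥ (1−ε')/(2L) · ⟨M, ρ(M)⟩²/‖ρ(M)‖_F² − ‖M − ∇f(W)‖_F²/(2Lε')`. -/
theorem htmuon_one_step_progress (m n : ℕ)
    (f : Matrix (Fin m) (Fin n) ℝ → ℝ) (gradf : Matrix (Fin m) (Fin n) ℝ → Matrix (Fin m) (Fin n) ℝ)
    (L : ℝ) (hL : 0 < L)
    (hderiv : ∀ W, HasFDerivAt f (traceCLM (gradf W)) W)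
    (hlip : ∀ W W', fnorm (gradf W - gradf W') ≤ L * fnorm (W - W'))
    (M : Matrix (Fin m) (Fin n) ℝ)
    (U : Matrix (Fin m) (Fin (min m n)) ℝ) (σ : Fin (min m n) → ℝ)
    (V : Matrix (Fin n) (Fin (min m n)) ℝ) (hsvd : IsSVD M U σ V)
    (p : ℝ) (hp : p ∈ Set.Ioo (0 : ℝ) 1)
    (ρM : Matrix (Fin m) (Fin n) ℝ)
    (hρ : ρM = U * Matrix.diagonal (fun i => σ i ^ p) * Vᵀ) (hρ0 : ρM ≠ 0)
    (η : ℝ) (hη : η = Matrix.trace (Mᵀ * ρM) / (L * frobSq ρM))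
    (ε' : ℝ) (hε' : ε' ∈ Set.Ioo (0 : ℝ) 1) :
    ∀ W, f W - f (W - η • ρM) ≥
      (1 - ε') / (2 * L) * ((Matrix.trace (Mᵀ * ρM)) ^ (2 : ℕ) / frobSq ρM) -
        frobSq (M - gradf W) / (2 * L * ε') := by
  intro W
  exact htmuon_one_step_progress_aux m n f gradf L hL hderiv hlip M ρM hρ0 η hη ε' hε' W
end
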